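/- Suppose 2^n = ∑_{i=1}^m d_i · 10^{e_i} with 1 ≤ d_i ≤ 9 and 0 ≤ e_1 < e_2 < ... < e_m, where n is a positive integer. Then for every k with 2 ≤ k ≤ m, e_k ≤ ⌊(log₂ 10)(e_{k-1} + 1)⌋. -/

import Mathlib

lemma geom9 (N : ℕ) : 9 * ∑ j ∈ Finset.range N, 10 ^ j + 1 = 10 ^ N := by
  induction N with
  | zero => simp
  | succ n ih =>
    rw [Finset.sum_range_succ, pow_succ]
    omega

theorem stmt7 (n m : ℕ) (d e : ℕ → ℕ) (hn : 0 < n)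
    (hd : ∀ i, 1 ≤ i → i ≤ m → 1 ≤ d i ∧ d i ≤ 9)
    (he : ∀ i j, 1 ≤ i → i < j → j ≤ m → e i < e j)
    (heq : 2 ^ n = ∑ i ∈ Finset.Icc 1 m, d i * 10 ^ (e i)) :
    ∀ k, 2 ≤ k → k ≤ m →
      (e k : ℤ) ≤ ⌊Real.logb 2 10 * ((e (k - 1) : ℝ) + 1)⌋ := by
  intro k hk2 hkm
  have hk1 : 1 ≤ k - 1 := by omega
  have hk1m : k - 1 ≤ m := by omega
  set L := ∑ i ∈ Finset.Icc 1 (k-1), d i * 10 ^ (e i) with hLdef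
  set H := ∑ i ∈ Finset.Ioc (k-1) m, d i * 10 ^ (e i) with hHdef
  have hdisj : Disjoint (Finset.Icc 1 (k-1)) (Finset.Ioc (k-1) m) := by
    rw [Finset.disjoint_left]
    intro a ha hb
    simp only [Finset.mem_Icc, Finset.mem_Ioc] at ha hb
    omega
  have hsplit : 2 ^ n = L + H := by
    rw [heq, ← Finset.sum_union hdisj]
    congr 1
    ext a
    simp only [Finset.mem_Icc, Finset.mem_union, Finset.mem_Ioc]
    omega
  -- e k ≤ n
  have hkmem : k ∈ Finset.Icc 1 m := by simp; omega
  have h10le : 10 ^ e k ≤ 2 ^ n := by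
    rw [heq]
    calc 10 ^ e k ≤ d k * 10 ^ e k := Nat.le_mul_of_pos_left _ (hd k (by omega) hkm).1
    _ ≤ _ := Finset.single_le_sum (f := fun i => d i * 10 ^ e i) (fun i _ => Nat.zero_le _) hkmem
  have h2le10 : (2:ℕ) ^ e k ≤ 10 ^ e k := Nat.pow_le_pow_left (by norm_num) _
  have hekn : e k ≤ n := by
    have : (2:ℕ) ^ e k ≤ 2 ^ n := le_trans h2le10 h10le
    exact (Nat.pow_le_pow_iff_right (by norm_num)).mp this
  -- 2 ^ e k divides H
  have hdvdH : 2 ^ e k ∣ H := by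
    apply Finset.dvd_sum
    intro i hi
    simp only [Finset.mem_Ioc] at hi
    have heki : e k ≤ e i := by
      rcases eq_or_lt_of_le (show k ≤ i by omega) with h | h
      · rw [h]
      · exact le_of_lt (he k i (by omega) h hi.2)
    have : (2:ℕ) ^ e k ∣ 10 ^ e i := by
      have : (10:ℕ) ^ e i = 2 ^ e i * 5 ^ e i := by
        rw [← Nat.mul_pow]
      rw [this]
      exact Dvd.dvd.mul_right (pow_dvd_pow 2 heki) _
    exact Dvd.dvd.mul_left this _
  have hdvdL : 2 ^ e k ∣ L := by
    have h2n : (2:ℕ) ^ e k ∣ 2 ^ n := pow_dvd_pow 2 hekn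
    have : L = 2 ^ n - H := by omega
    rw [this]
    exact Nat.dvd_sub h2n hdvdH
  -- L > 0
  have hLpos : 0 < L := by
    have hmem : k - 1 ∈ Finset.Icc 1 (k-1) := by simp; omega
    have h1 : 1 ≤ d (k-1) * 10 ^ e (k-1) :=
      Nat.one_le_iff_ne_zero.mpr (Nat.mul_ne_zero (by have := (hd (k-1) hk1 hk1m).1; omega) (by positivity))
    calc (0:ℕ) < d (k-1) * 10 ^ e (k-1) := h1
    _ ≤ L := Finset.single_le_sum (f := fun i => d i * 10 ^ e i) (fun i _ => Nat.zero_le _) hmem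
  have hLge : 2 ^ e k ≤ L := Nat.le_of_dvd hLpos hdvdL
  -- L < 10 ^ (e (k-1) + 1)
  have hLlt : L < 10 ^ (e (k-1) + 1) := by
    have hinj : Set.InjOn e (Finset.Icc 1 (k-1)) := by
      intro a ha b hb hab
      simp only [Finset.coe_Icc, Set.mem_Icc, Finset.mem_coe, Finset.mem_Icc] at ha hb
      by_contra hne
      rcases Nat.lt_or_ge a b with h | h
      · have := he a b ha.1 h (by omega); omega
      · have hba : b < a := by omega
        have := he b a hb.1 hba (by omega); omega
    have h1 : L ≤ ∑ i ∈ Finset.Icc 1 (k-1), 9 * 10 ^ e i := by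
      apply Finset.sum_le_sum
      intro i hi
      simp only [Finset.mem_Icc] at hi
      exact Nat.mul_le_mul_right _ (hd i hi.1 (by omega)).2
    have h2 : ∑ i ∈ Finset.Icc 1 (k-1), 9 * 10 ^ e i
        = ∑ j ∈ (Finset.Icc 1 (k-1)).image e, 9 * 10 ^ j := by
      rw [Finset.sum_image (fun a ha b hb hab => hinj ha hb hab)]
    have h3 : (Finset.Icc 1 (k-1)).image e ⊆ Finset.range (e (k-1) + 1) := by
      intro j hj
      simp only [Finset.mem_image, Finset.mem_Icc] at hj
      obtain ⟨i, ⟨hi1, hi2⟩, rfl⟩ := hj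
      simp only [Finset.mem_range]
      rcases eq_or_lt_of_le hi2 with h | h
      · rw [h]; omega
      · have := he i (k-1) hi1 h hk1m; omega
    have h4 : ∑ j ∈ (Finset.Icc 1 (k-1)).image e, 9 * 10 ^ j
        ≤ ∑ j ∈ Finset.range (e (k-1) + 1), 9 * 10 ^ j :=
      Finset.sum_le_sum_of_subset h3
    have h5 := geom9 (e (k-1) + 1)
    rw [Finset.mul_sum] at h5
    omega
  have hkey : (2:ℕ) ^ e k < 10 ^ (e (k-1) + 1) := lt_of_le_of_lt hLge hLlt
  -- pass to reals
  have hr : (2:ℝ) ^ e k < 10 ^ (e (k-1) + 1) := by exact_mod_cast hkey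
  have hfin : (e k : ℝ) < Real.logb 2 10 * ((e (k-1) : ℝ) + 1) := by
    have h := Real.logb_lt_logb (by norm_num : (1:ℝ) < 2) (by positivity) hr
    rw [Real.logb_pow, Real.logb_pow, Real.logb_self_eq_one (b:=2) (by norm_num : (1:ℝ)<2)] at h
    push_cast at h ⊢
    nlinarith [h]
  exact Int.le_floor.mpr (by push_cast; linarith)
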